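/- arXiv:1407.0783 — 4 statements merged into one kernel-verified Lean document; each statement's English description precedes it below -/
import Mathlib

section
/- For every τ ∈ ℝ, the lowest eigenvalue λ(τ) of the Montgomery operator P(τ) = -d²/dt² + (t²/2 + τ)² on L²(ℝ) is strictly positive. -/
open MeasureTheory

/-- The quadratic form of the Montgomery operator `P(τ) = -d²/dt² + (t²/2 + τ)²` on `L²(ℝ)`. -/
noncomputable def montgomeryForm (τ : ℝ) (f : ℝ → ℝ) : ℝ :=
  ∫ t : ℝ, ((deriv f t) ^ 2 + (t ^ 2 / 2 + τ) ^ 2 * (f t) ^ 2)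

/-- Admissible (normalized) trial functions: `f ∈ H¹(ℝ)` with `t² f ∈ L²(ℝ)` and `‖f‖₂ = 1`. -/
def montgomeryAdm (f : ℝ → ℝ) : Prop :=
  Differentiable ℝ f ∧
  Integrable (fun t : ℝ => (deriv f t) ^ 2) ∧
  Integrable (fun t : ℝ => (f t) ^ 2) ∧
  Integrable (fun t : ℝ => (t ^ 2 * f t) ^ 2) ∧
  (∫ t : ℝ, (f t) ^ 2) = 1

/-- The lowest eigenvalue `λ(τ)` of the Montgomery operator, defined variationally. -/
noncomputable def montgomeryLambda (τ : ℝ) : ℝ :=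
  sInf {E : ℝ | ∃ f : ℝ → ℝ, montgomeryAdm f ∧ montgomeryForm τ f = E}

section MontgomeryAux

open Real Filter Topology intervalIntegral


noncomputable def mgG (c t : ℝ) : ℝ :=
  (1/50) * (arctan ((t - c)/2) + arctan ((t + c)/2))

noncomputable def mgG' (c t : ℝ) : ℝ :=
  (1/100) * (1/(1+((t - c)/2)^2) + 1/(1+((t + c)/2)^2))

lemma mgG_hasDerivAt (c t : ℝ) : HasDerivAt (mgG c) (mgG' c t) t := by
  have h1 : HasDerivAt (fun t : ℝ => (t - c)/2) (1/2) t :=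
    ((hasDerivAt_id t).sub_const c).div_const 2
  have h2 : HasDerivAt (fun t : ℝ => (t + c)/2) (1/2) t :=
    ((hasDerivAt_id t).add_const c).div_const 2
  have h3 := (Real.hasDerivAt_arctan ((t - c)/2)).comp t h1
  have h4 := (Real.hasDerivAt_arctan ((t + c)/2)).comp t h2
  have H := ((h3.add h4).const_mul (1/50 : ℝ))
  have he : mgG' c t = (1/50) * (1/(1+((t - c)/2)^2) * (1/2) + 1/(1+((t + c)/2)^2) * (1/2)) := by
    simp only [mgG']; ring
  rw [he]
  exact H

lemma mgG_sq_le (c t : ℝ) : (mgG c t)^2 ≤ (63/1000)^2 := by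
  have h1 := Real.arctan_lt_pi_div_two ((t - c)/2)
  have h1' := Real.neg_pi_div_two_lt_arctan ((t - c)/2)
  have h2 := Real.arctan_lt_pi_div_two ((t + c)/2)
  have h2' := Real.neg_pi_div_two_lt_arctan ((t + c)/2)
  have hpi : Real.pi ≤ 3.15 := Real.pi_lt_d2.le
  have : |mgG c t| ≤ 63/1000 := by
    rw [abs_le]
    constructor <;> simp only [mgG] <;> nlinarith
  calc (mgG c t)^2 = |mgG c t|^2 := (sq_abs _).symm
    _ ≤ (63/1000)^2 := by nlinarith [abs_nonneg (mgG c t)]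

lemma mgG_abs_le (c t : ℝ) : |mgG c t| ≤ 63/1000 := by
  nlinarith [abs_nonneg (mgG c t), sq_abs (mgG c t), mgG_sq_le c t]

lemma mgG'_nonneg (c t : ℝ) : 0 ≤ mgG' c t := by
  have := sq_nonneg ((t-c)/2); have := sq_nonneg ((t+c)/2)
  simp only [mgG']; positivity

lemma mgG'_le (c t : ℝ) : mgG' c t ≤ 1/50 := by
  have h1 : 1/(1+((t - c)/2)^2) ≤ 1 := by
    rw [div_le_one (by positivity)]; nlinarith [sq_nonneg ((t-c)/2)]
  have h2 : 1/(1+((t + c)/2)^2) ≤ 1 := by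
    rw [div_le_one (by positivity)]; nlinarith [sq_nonneg ((t+c)/2)]
  simp only [mgG']; nlinarith

lemma mgKey (c t : ℝ) :
    1/1000 ≤ mgG' c t - (mgG c t)^2 + ((t^2 - c^2)/2)^2 := by
  have hsq := mgG_sq_le c t
  have hW : (0:ℝ) ≤ ((t^2 - c^2)/2)^2 := sq_nonneg _
  rcases le_total ((t - c)^2) 4 with h | h
  · -- first arctan term derivative is big
    have hb : 1/2 ≤ 1/(1+((t - c)/2)^2) := by
      rw [le_div_iff₀ (by positivity)]; nlinarith
    have hb2 : 0 ≤ 1/(1+((t + c)/2)^2) := by positivity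
    have : 1/200 ≤ mgG' c t := by simp only [mgG']; nlinarith
    nlinarith
  · rcases le_total ((t + c)^2) 4 with h' | h'
    · have hb : 1/2 ≤ 1/(1+((t + c)/2)^2) := by
        rw [le_div_iff₀ (by positivity)]; nlinarith
      have hb2 : 0 ≤ 1/(1+((t - c)/2)^2) := by positivity
      have : 1/200 ≤ mgG' c t := by simp only [mgG']; nlinarith
      nlinarith
    · have hprod : (4:ℝ) ≤ ((t^2 - c^2)/2)^2 := by
        have : ((t^2 - c^2)/2)^2 = (t-c)^2 * (t+c)^2 / 4 := by ring
        rw [this]; nlinarith [sq_nonneg (t-c), sq_nonneg (t+c)]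
      have := mgG'_nonneg c t
      nlinarith

lemma mgG_continuous (c : ℝ) : Continuous (mgG c) := by
  unfold mgG
  exact continuous_const.mul
    ((Real.continuous_arctan.comp (by fun_prop)).add
      (Real.continuous_arctan.comp (by fun_prop)))

lemma mgG'_continuous (c : ℝ) : Continuous (mgG' c) := by
  unfold mgG'
  have h1 : ∀ t : ℝ, 1 + ((t - c)/2)^2 ≠ 0 := fun t => by positivity
  have h2 : ∀ t : ℝ, 1 + ((t + c)/2)^2 ≠ 0 := fun t => by positivity
  exact continuous_const.mul
    (((continuous_const.div (by fun_prop) h1)).add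
      ((continuous_const.div (by fun_prop) h2)))

lemma mg_integral_deriv_eq_zero {h h' : ℝ → ℝ}
    (hd : ∀ x, HasDerivAt h (h' x) x)
    (hint : Integrable h) (h'int : Integrable h') : ∫ x, h' x = 0 := by
  have t1 : Tendsto h atTop (𝓝 0) :=
    tendsto_zero_of_hasDerivAt_of_integrableOn_Ioi (a := 0) (fun x _ => hd x)
      h'int.integrableOn hint.integrableOn
  have t2 : Tendsto h atBot (𝓝 0) :=
    tendsto_zero_of_hasDerivAt_of_integrableOn_Iic (a := 0) (fun x _ => hd x)
      h'int.integrableOn hint.integrableOn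
  rw [← intervalIntegral.integral_Iic_add_Ioi (b := 0) h'int.integrableOn h'int.integrableOn,
    integral_Iic_of_hasDerivAt_of_tendsto' (fun x _ => hd x) h'int.integrableOn t2,
    integral_Ioi_of_hasDerivAt_of_tendsto' (fun x _ => hd x) h'int.integrableOn t1]
  ring


lemma montgomeryForm_ge (τ : ℝ) (f : ℝ → ℝ) (hf : montgomeryAdm f) :
    1/1000 ≤ montgomeryForm τ f := by
  obtain ⟨hdiff, hd2, hf2, ht2, hnorm⟩ := hf
  set c := Real.sqrt (max (-(2*τ)) 0) with hcdef
  have hc2 : c^2 = max (-(2*τ)) 0 := Real.sq_sqrt (le_max_right _ _)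
  have hW : ∀ t : ℝ, ((t^2 - c^2)/2)^2 ≤ (t^2/2 + τ)^2 := by
    intro t
    rcases le_total τ 0 with h | h
    · rw [hc2, max_eq_left (by linarith)]; ring_nf; nlinarith [sq_nonneg t]
    · rw [hc2, max_eq_right (by linarith)]; nlinarith [sq_nonneg t, sq_nonneg (t^2/2)]
  have hfc : Continuous f := hdiff.continuous
  have hmf' : AEStronglyMeasurable (deriv f) volume :=
    (measurable_deriv f).aestronglyMeasurable
  -- integrability facts
  have hff' : Integrable (fun t => f t * deriv f t) := by
    refine Integrable.mono' ((hf2.add hd2).const_mul (1/2)) ((hfc.aestronglyMeasurable.mul hmf')) ?_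
    filter_upwards with t
    simp only [Pi.add_apply]
    rw [Real.norm_eq_abs, abs_mul]
    nlinarith [sq_nonneg (|f t| - |deriv f t|), sq_abs (f t), sq_abs (deriv f t),
      abs_nonneg (f t), abs_nonneg (deriv f t)]
  have hgf2 : Integrable (fun t => mgG c t * f t ^ 2) := by
    refine Integrable.mono' (hf2.const_mul (63/1000))
      ((mgG_continuous c).mul (hfc.pow 2)).aestronglyMeasurable ?_
    filter_upwards with t
    rw [Real.norm_eq_abs, abs_mul]
    have h2 := mgG_abs_le c t
    have := sq_nonneg (f t)
    calc |mgG c t| * |f t ^ 2| = |mgG c t| * f t ^ 2 := by rw [abs_of_nonneg this]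
      _ ≤ 63/1000 * f t ^ 2 := by nlinarith
  have hg'f2 : Integrable (fun t => mgG' c t * f t ^ 2) := by
    refine Integrable.mono' (hf2.const_mul (1/50))
      ((mgG'_continuous c).mul (hfc.pow 2)).aestronglyMeasurable ?_
    filter_upwards with t
    rw [Real.norm_eq_abs, abs_mul, abs_of_nonneg (mgG'_nonneg c t), abs_of_nonneg (sq_nonneg (f t))]
    nlinarith [mgG'_le c t, mgG'_nonneg c t, sq_nonneg (f t)]
  have hg2f2 : Integrable (fun t => (mgG c t)^2 * f t ^ 2) := by
    refine Integrable.mono' (hf2.const_mul ((63/1000)^2))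
      (((mgG_continuous c).pow 2).mul (hfc.pow 2)).aestronglyMeasurable ?_
    filter_upwards with t
    rw [Real.norm_eq_abs, abs_mul, abs_of_nonneg (sq_nonneg _), abs_of_nonneg (sq_nonneg (f t))]
    nlinarith [mgG_sq_le c t, sq_nonneg (f t)]
  have hgff' : Integrable (fun t => mgG c t * (2 * f t * deriv f t)) := by
    refine Integrable.mono' (hff'.abs.const_mul (2 * (63/1000)))
      ((mgG_continuous c).aestronglyMeasurable.mul (((continuous_const.mul hfc).aestronglyMeasurable).mul hmf')) ?_
    filter_upwards with t
    rw [Real.norm_eq_abs, abs_mul]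
    have h2 := mgG_abs_le c t
    have h3 : |2 * f t * deriv f t| = 2 * |f t * deriv f t| := by
      rw [mul_assoc, abs_mul]; simp
    rw [h3]
    nlinarith [abs_nonneg (f t * deriv f t), abs_nonneg (mgG c t)]
  -- the potential terms
  have ht2f2 : Integrable (fun t => t^2 * f t ^ 2) := by
    refine Integrable.mono' ((hf2.add ht2).const_mul (1/2)) ((continuous_pow 2).mul (hfc.pow 2)).aestronglyMeasurable ?_
    filter_upwards with t
    simp only [Pi.add_apply]
    rw [Real.norm_eq_abs, abs_of_nonneg (by positivity)]
    nlinarith [sq_nonneg (f t), sq_nonneg (t^2*f t), sq_nonneg ((t^2-1) * f t)]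
  have hWf2 : Integrable (fun t => (t^2/2 + τ)^2 * f t ^ 2) := by
    have : (fun t : ℝ => (t^2/2 + τ)^2 * f t ^ 2) =
        (fun t : ℝ => (1/4) * (t^2 * f t)^2 + (τ * (t^2 * f t ^2) + τ^2 * f t ^2)) := by
      funext t; ring
    rw [this]
    exact (ht2.const_mul (1/4)).add ((ht2f2.const_mul τ).add (hf2.const_mul (τ^2)))
  have hWlowf2 : Integrable (fun t => ((t^2 - c^2)/2)^2 * f t ^ 2) := by
    refine Integrable.mono' hWf2 ((((continuous_pow 2).sub continuous_const).div_const 2).pow 2 |>.mul (hfc.pow 2)).aestronglyMeasurable ?_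
    filter_upwards with t
    rw [Real.norm_eq_abs, abs_of_nonneg (by positivity)]
    exact mul_le_mul_of_nonneg_right (hW t) (sq_nonneg _)
  -- integration by parts
  have hibp : (∫ t, (mgG' c t * f t ^ 2 + mgG c t * (2 * f t * deriv f t))) = 0 := by
    refine mg_integral_deriv_eq_zero (h := fun t => mgG c t * f t ^ 2) ?_ hgf2 (hg'f2.add hgff')
    intro x
    have hfx : HasDerivAt (fun t => f t ^ 2) (2 * f x * deriv f x) x := by
      simpa [mul_comm] using (hdiff x).hasDerivAt.fun_pow 2
    exact (mgG_hasDerivAt c x).mul hfx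
  have hsplit : (∫ t, mgG' c t * f t ^ 2) + (∫ t, mgG c t * (2 * f t * deriv f t)) = 0 := by
    rw [← integral_add hg'f2 hgff']; exact hibp
  -- positivity of the square
  have hpos : 0 ≤ (∫ t, (deriv f t ^ 2 + mgG c t * (2 * f t * deriv f t) + (mgG c t)^2 * f t ^ 2)) := by
    refine integral_nonneg fun t => ?_
    show (0:ℝ) ≤ _
    nlinarith [sq_nonneg (deriv f t + mgG c t * f t)]
  have hpos2 : 0 ≤ (∫ t, deriv f t ^ 2) + (∫ t, mgG c t * (2 * f t * deriv f t))
      + (∫ t, (mgG c t)^2 * f t ^ 2) := by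
    have hA : Integrable (fun t => deriv f t ^ 2 + mgG c t * (2 * f t * deriv f t)) :=
      hd2.add hgff'
    rwa [show (fun t => deriv f t ^ 2 + mgG c t * (2 * f t * deriv f t) + (mgG c t)^2 * f t ^ 2)
        = (fun t => (deriv f t ^ 2 + mgG c t * (2 * f t * deriv f t)) + (mgG c t)^2 * f t ^ 2)
        from rfl, integral_add hA hg2f2, integral_add hd2 hgff'] at hpos
  have hkin : (∫ t, mgG' c t * f t ^ 2) - (∫ t, (mgG c t)^2 * f t ^ 2) ≤ ∫ t, deriv f t ^ 2 := by
    linarith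
  -- assemble
  have hform : montgomeryForm τ f = (∫ t, deriv f t ^ 2) + ∫ t, (t^2/2 + τ)^2 * f t ^ 2 := by
    rw [montgomeryForm, integral_add hd2 hWf2]
  have hmono1 : (∫ t, ((t^2 - c^2)/2)^2 * f t ^ 2) ≤ ∫ t, (t^2/2 + τ)^2 * f t ^ 2 := by
    refine integral_mono hWlowf2 hWf2 fun t => ?_
    exact mul_le_mul_of_nonneg_right (hW t) (sq_nonneg _)
  have hfinal : 1/1000 ≤ (∫ t, mgG' c t * f t ^ 2) - (∫ t, (mgG c t)^2 * f t ^ 2)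
      + ∫ t, ((t^2 - c^2)/2)^2 * f t ^ 2 := by
    have hcomb : (∫ t, mgG' c t * f t ^ 2) - (∫ t, (mgG c t)^2 * f t ^ 2)
        + (∫ t, ((t^2 - c^2)/2)^2 * f t ^ 2)
        = ∫ t, (mgG' c t * f t ^ 2 - (mgG c t)^2 * f t ^ 2 + ((t^2 - c^2)/2)^2 * f t ^ 2) := by
      have hB : Integrable (fun t => mgG' c t * f t ^ 2 - (mgG c t)^2 * f t ^ 2) :=
        hg'f2.sub hg2f2
      rw [integral_add hB hWlowf2, integral_sub hg'f2 hg2f2]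
    rw [hcomb]
    have hle : ∀ t : ℝ, (1/1000) * f t ^ 2
        ≤ mgG' c t * f t ^ 2 - (mgG c t)^2 * f t ^ 2 + ((t^2 - c^2)/2)^2 * f t ^ 2 := by
      intro t
      nlinarith [mgKey c t, sq_nonneg (f t)]
    have := integral_mono (hf2.const_mul (1/1000)) ((hg'f2.sub hg2f2).add hWlowf2) hle
    calc (1/1000 : ℝ) = ∫ t, (1/1000) * f t ^ 2 := by rw [MeasureTheory.integral_const_mul, hnorm]; norm_num
      _ ≤ _ := this
  linarith

noncomputable def mgGauss (t : ℝ) : ℝ := (Real.sqrt (Real.sqrt π))⁻¹ * Real.exp (-(t^2)/2)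

lemma mgGauss_hasDerivAt (t : ℝ) :
    HasDerivAt mgGauss ((Real.sqrt (Real.sqrt π))⁻¹ * (Real.exp (-(t^2)/2) * -t)) t := by
  have hu : HasDerivAt (fun t : ℝ => -(t^2)/2) (-t) t := by
    have h := ((hasDerivAt_pow 2 t).neg).div_const 2
    rw [show (-t) = -(((2:ℕ):ℝ) * t^(2-1))/2 by push_cast; ring]
    exact h
  have hExp := (Real.hasDerivAt_exp (-(t^2)/2)).comp t hu
  exact hExp.const_mul ((Real.sqrt (Real.sqrt π))⁻¹)

lemma mgGauss_adm : montgomeryAdm mgGauss := by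
  set c0 : ℝ := (Real.sqrt (Real.sqrt π))⁻¹ with hc0
  have hπ : (0:ℝ) < π := Real.pi_pos
  have hc0sq : c0^2 = (Real.sqrt π)⁻¹ := by
    rw [hc0, ← one_div, div_pow, one_pow, Real.sq_sqrt (Real.sqrt_nonneg π), one_div]
  have hderiv : ∀ t, deriv mgGauss t = c0 * (Real.exp (-(t^2)/2) * -t) :=
    fun t => (mgGauss_hasDerivAt t).deriv
  have hexp2 : ∀ t : ℝ, Real.exp (-(t^2)/2) ^ 2 = Real.exp (-1 * t^2) := by
    intro t
    rw [show (-1 * t^2 : ℝ) = (-(t^2)/2) + (-(t^2)/2) by ring, Real.exp_add]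
    ring
  have hint2 : Integrable (fun x : ℝ => x^2 * Real.exp (-1 * x^2)) := by
    have h2 := integrable_rpow_mul_exp_neg_mul_sq (b := 1) one_pos (s := ((2:ℕ):ℝ))
      (by norm_num)
    simp only [Real.rpow_natCast] at h2
    exact h2
  have hint4 : Integrable (fun x : ℝ => x^4 * Real.exp (-1 * x^2)) := by
    have h4 := integrable_rpow_mul_exp_neg_mul_sq (b := 1) one_pos (s := ((4:ℕ):ℝ))
      (by norm_num)
    simp only [Real.rpow_natCast] at h4
    exact h4
  have hint0 : Integrable (fun x : ℝ => Real.exp (-1 * x^2)) :=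
    integrable_exp_neg_mul_sq one_pos
  refine ⟨fun t => (mgGauss_hasDerivAt t).differentiableAt, ?_, ?_, ?_, ?_⟩
  · have heq : (fun t : ℝ => (deriv mgGauss t)^2)
        = fun t : ℝ => c0^2 * (t^2 * Real.exp (-1 * t^2)) := by
      funext t
      rw [hderiv t, ← hexp2 t]
      ring
    rw [heq]
    exact hint2.const_mul (c0^2)
  · have heq : (fun t : ℝ => (mgGauss t)^2) = fun t : ℝ => c0^2 * Real.exp (-1 * t^2) := by
      funext t
      rw [mgGauss, mul_pow, hexp2 t]
    rw [heq]
    exact hint0.const_mul _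
  · have heq : (fun t : ℝ => (t^2 * mgGauss t)^2)
        = fun t : ℝ => c0^2 * (t^4 * Real.exp (-1 * t^2)) := by
      funext t
      rw [mgGauss, ← hexp2 t]
      ring
    rw [heq]
    exact hint4.const_mul (c0^2)
  · have heq : (fun t : ℝ => (mgGauss t)^2) = fun t : ℝ => c0^2 * Real.exp (-1 * t^2) := by
      funext t
      rw [mgGauss, mul_pow, hexp2 t]
    rw [heq, MeasureTheory.integral_const_mul, integral_gaussian, hc0sq]
    rw [show π / 1 = π by ring]
    rw [inv_mul_cancel₀ (ne_of_gt (Real.sqrt_pos.mpr hπ))]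

end MontgomeryAux

open Real Filter Topology in
/-- For every `τ ∈ ℝ`, the lowest eigenvalue `λ(τ)` of the Montgomery operator is positive. -/
theorem montgomeryLambda_pos (τ : ℝ) : 0 < montgomeryLambda τ := by
  have hne : {E : ℝ | ∃ f : ℝ → ℝ, montgomeryAdm f ∧ montgomeryForm τ f = E}.Nonempty :=
    ⟨montgomeryForm τ mgGauss, mgGauss, mgGauss_adm, rfl⟩
  have hlb : ∀ E ∈ {E : ℝ | ∃ f : ℝ → ℝ, montgomeryAdm f ∧ montgomeryForm τ f = E},
      (1/1000 : ℝ) ≤ E := by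
    rintro E ⟨f, hf, rfl⟩
    exact montgomeryForm_ge τ f hf
  have h := le_csInf hne hlb
  rw [montgomeryLambda]
  linarith
end

section
/- The lowest eigenvalue λ(τ) of the Montgomery operator tends to +∞ as τ → +∞ and as τ → -∞. -/
open MeasureTheory

namespace MontgomeryAux

open Real Set

/-! ### Integrability facts for admissible functions -/

lemma integrable_t2f2 {f : ℝ → ℝ} (hd : Differentiable ℝ f)
    (h2 : Integrable (fun t : ℝ => (f t) ^ 2))
    (h4 : Integrable (fun t : ℝ => (t ^ 2 * f t) ^ 2)) :
    Integrable (fun t : ℝ => t ^ 2 * (f t) ^ 2) := by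
  refine (h2.add h4).mono' ?_ (Filter.Eventually.of_forall fun t => ?_)
  · exact ((measurable_id.pow_const 2).mul
      (hd.continuous.measurable.pow_const 2)).aestronglyMeasurable
  · rw [Real.norm_eq_abs, abs_of_nonneg (by positivity)]
    show t ^ 2 * f t ^ 2 ≤ f t ^ 2 + (t ^ 2 * f t) ^ 2
    nlinarith [sq_nonneg (t ^ 2 * f t - f t), sq_nonneg (f t), sq_nonneg (t ^ 2 * f t)]

lemma integrable_pot (τ : ℝ) {f : ℝ → ℝ} (hf : montgomeryAdm f) :
    Integrable (fun t : ℝ => (t ^ 2 / 2 + τ) ^ 2 * (f t) ^ 2) := by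
  obtain ⟨hd, hK, h2, h4, -⟩ := hf
  have ht2 := integrable_t2f2 hd h2 h4
  have heq : (fun t : ℝ => (t ^ 2 / 2 + τ) ^ 2 * (f t) ^ 2)
      = fun t : ℝ => (1 / 4) * (t ^ 2 * f t) ^ 2 + (τ * (t ^ 2 * (f t) ^ 2) + τ ^ 2 * (f t) ^ 2) := by
    funext t; ring
  rw [heq]
  exact (h4.const_mul _).add ((ht2.const_mul _).add (h2.const_mul _))

lemma form_eq (τ : ℝ) {f : ℝ → ℝ} (hf : montgomeryAdm f) :
    montgomeryForm τ f
      = (∫ t : ℝ, (deriv f t) ^ 2) + ∫ t : ℝ, (t ^ 2 / 2 + τ) ^ 2 * (f t) ^ 2 := by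
  unfold montgomeryForm
  exact integral_add hf.2.1 (integrable_pot τ hf)

/-! ### The Gaussian trial function -/

noncomputable def gaussF : ℝ → ℝ := fun t => (Real.sqrt (Real.sqrt π))⁻¹ * Real.exp (-(t ^ 2) / 2)

lemma gauss_hasDerivAt (t : ℝ) :
    HasDerivAt gaussF ((Real.sqrt (Real.sqrt π))⁻¹ * (Real.exp (-(t ^ 2) / 2) * (-t))) t := by
  have h1 : HasDerivAt (fun t : ℝ => -(t ^ 2) / 2) (-t) t := by
    have h0 := ((hasDerivAt_pow 2 t).neg).div_const 2
    exact h0.congr_deriv (by push_cast; ring)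
  exact h1.exp.const_mul _

lemma hexp (t : ℝ) : (Real.exp (-(t ^ 2) / 2)) ^ 2 = Real.exp (-1 * t ^ 2) := by
  rw [sq, ← Real.exp_add]; congr 1; ring

lemma gauss_adm : montgomeryAdm gaussF := by
  have hπ : 0 < π := pi_pos
  set c : ℝ := (Real.sqrt (Real.sqrt π))⁻¹ with hc
  have hsπ : 0 < Real.sqrt π := Real.sqrt_pos.mpr hπ
  have hc2 : c ^ 2 = (Real.sqrt π)⁻¹ := by
    rw [hc, inv_pow, Real.sq_sqrt (Real.sqrt_nonneg _)]
  have hbase : Integrable (fun t : ℝ => Real.exp (-(1 / 2 : ℝ) * t ^ 2)) :=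
    integrable_exp_neg_mul_sq (by norm_num)
  have h0e : Integrable (fun t : ℝ => Real.exp (-1 * t ^ 2)) :=
    integrable_exp_neg_mul_sq one_pos
  have h2e : Integrable (fun t : ℝ => t ^ 2 * Real.exp (-1 * t ^ 2)) := by
    refine (hbase.const_mul 2).mono' (Continuous.aestronglyMeasurable (by continuity))
      (Filter.Eventually.of_forall fun t => ?_)
    rw [Real.norm_eq_abs, abs_of_nonneg (by positivity)]
    have h1 : t ^ 2 ≤ 2 * Real.exp (t ^ 2 / 2) := by
      linarith [Real.add_one_le_exp (t ^ 2 / 2), Real.exp_pos (t ^ 2 / 2)]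
    have h2 : t ^ 2 * Real.exp (-1 * t ^ 2)
        ≤ 2 * Real.exp (t ^ 2 / 2) * Real.exp (-1 * t ^ 2) :=
      mul_le_mul_of_nonneg_right h1 (Real.exp_pos _).le
    have h3 : 2 * Real.exp (t ^ 2 / 2) * Real.exp (-1 * t ^ 2)
        = 2 * Real.exp (-(1 / 2 : ℝ) * t ^ 2) := by
      rw [mul_assoc, ← Real.exp_add]; congr 2; ring
    linarith
  have h4e : Integrable (fun t : ℝ => t ^ 4 * Real.exp (-1 * t ^ 2)) := by
    refine (hbase.const_mul 16).mono' (Continuous.aestronglyMeasurable (by continuity))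
      (Filter.Eventually.of_forall fun t => ?_)
    rw [Real.norm_eq_abs, abs_of_nonneg (by positivity)]
    have ha : t ^ 2 ≤ 4 * Real.exp (t ^ 2 / 4) := by
      linarith [Real.add_one_le_exp (t ^ 2 / 4), Real.exp_pos (t ^ 2 / 4)]
    have hb : t ^ 4 ≤ 16 * Real.exp (t ^ 2 / 4) ^ 2 := by
      nlinarith [mul_le_mul ha ha (sq_nonneg t) (by positivity : (0:ℝ) ≤ 4 * Real.exp (t ^ 2 / 4))]
    have hcq : Real.exp (t ^ 2 / 4) ^ 2 = Real.exp (t ^ 2 / 2) := by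
      rw [sq, ← Real.exp_add]; congr 1; ring
    have h2 : t ^ 4 * Real.exp (-1 * t ^ 2)
        ≤ 16 * Real.exp (t ^ 2 / 2) * Real.exp (-1 * t ^ 2) := by
      rw [← hcq]
      exact mul_le_mul_of_nonneg_right hb (Real.exp_pos _).le
    have h3 : 16 * Real.exp (t ^ 2 / 2) * Real.exp (-1 * t ^ 2)
        = 16 * Real.exp (-(1 / 2 : ℝ) * t ^ 2) := by
      rw [mul_assoc, ← Real.exp_add]; congr 2; ring
    linarith
  have hderiv : ∀ t : ℝ, deriv gaussF t = c * (Real.exp (-(t ^ 2) / 2) * (-t)) :=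
    fun t => (gauss_hasDerivAt t).deriv
  refine ⟨fun t => (gauss_hasDerivAt t).differentiableAt, ?_, ?_, ?_, ?_⟩
  · have heq : (fun t : ℝ => (deriv gaussF t) ^ 2)
        = fun t : ℝ => c ^ 2 * (t ^ 2 * Real.exp (-1 * t ^ 2)) := by
      funext t
      rw [hderiv t, show (c * (Real.exp (-(t ^ 2) / 2) * (-t))) ^ 2
        = c ^ 2 * (t ^ 2 * (Real.exp (-(t ^ 2) / 2)) ^ 2) from by ring, hexp t]
    rw [heq]; exact h2e.const_mul _
  · have heq : (fun t : ℝ => (gaussF t) ^ 2)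
        = fun t : ℝ => c ^ 2 * Real.exp (-1 * t ^ 2) := by
      funext t
      rw [gaussF, show (c * Real.exp (-(t ^ 2) / 2)) ^ 2
        = c ^ 2 * (Real.exp (-(t ^ 2) / 2)) ^ 2 from by ring, hexp t]
    rw [heq]; exact h0e.const_mul _
  · have heq : (fun t : ℝ => (t ^ 2 * gaussF t) ^ 2)
        = fun t : ℝ => c ^ 2 * (t ^ 4 * Real.exp (-1 * t ^ 2)) := by
      funext t
      rw [gaussF, show (t ^ 2 * (c * Real.exp (-(t ^ 2) / 2))) ^ 2
        = c ^ 2 * (t ^ 4 * (Real.exp (-(t ^ 2) / 2)) ^ 2) from by ring, hexp t]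
    rw [heq]; exact (h4e.const_mul _)
  · have heq : (fun t : ℝ => (gaussF t) ^ 2)
        = fun t : ℝ => c ^ 2 * Real.exp (-1 * t ^ 2) := by
      funext t
      rw [gaussF, show (c * Real.exp (-(t ^ 2) / 2)) ^ 2
        = c ^ 2 * (Real.exp (-(t ^ 2) / 2)) ^ 2 from by ring, hexp t]
    rw [heq, integral_const_mul, integral_gaussian, div_one, hc2]
    exact inv_mul_cancel₀ (ne_of_gt hsπ)

lemma set_nonempty (τ : ℝ) :
    {E : ℝ | ∃ f : ℝ → ℝ, montgomeryAdm f ∧ montgomeryForm τ f = E}.Nonempty :=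
  ⟨montgomeryForm τ gaussF, gaussF, gauss_adm, rfl⟩

lemma lambda_ge {τ c : ℝ} (h : ∀ f : ℝ → ℝ, montgomeryAdm f → c ≤ montgomeryForm τ f) :
    c ≤ montgomeryLambda τ := by
  refine le_csInf (set_nonempty τ) ?_
  rintro E ⟨f, hf, rfl⟩
  exact h f hf

/-! ### Sup-norm bound -/

lemma sup_bound {f : ℝ → ℝ} (hf : montgomeryAdm f) (x : ℝ) :
    (f x) ^ 2 ≤ 3 / 2 + ∫ t : ℝ, (deriv f t) ^ 2 := by
  obtain ⟨hd, hK, h2, h4, hnorm⟩ := hf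
  set K := ∫ t : ℝ, (deriv f t) ^ 2 with hKdef
  have hmf : Measurable f := hd.continuous.measurable
  have hg : Integrable (fun t : ℝ => 2 * f t * deriv f t) := by
    refine (h2.add hK).mono'
      (((hmf.const_mul 2).mul (measurable_deriv f)).aestronglyMeasurable)
      (Filter.Eventually.of_forall fun t => ?_)
    rw [Real.norm_eq_abs]
    have h1 : |2 * f t * deriv f t| = 2 * (|f t| * |deriv f t|) := by
      rw [mul_assoc, abs_mul, abs_mul]; simp [abs_of_nonneg]
    rw [h1]
    show 2 * (|f t| * |deriv f t|) ≤ f t ^ 2 + deriv f t ^ 2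
    nlinarith [sq_abs (f t), sq_abs (deriv f t), sq_nonneg (|f t| - |deriv f t|)]
  have hftc : ∀ y : ℝ, f x ^ 2 - f y ^ 2 = ∫ t in y..x, 2 * f t * deriv f t := by
    intro y
    have h := intervalIntegral.integral_eq_sub_of_hasDerivAt
      (f := fun t => f t ^ 2) (f' := fun t => 2 * f t * deriv f t) (a := y) (b := x)
      (fun t _ => by simpa [mul_comm, mul_assoc] using ((hd t).hasDerivAt.fun_pow 2))
      (hg.intervalIntegrable)
    have h' : (∫ t in y..x, 2 * f t * deriv f t) = f x ^ 2 - f y ^ 2 := h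
    linarith
  have habs : ∀ y : ℝ, |∫ t in y..x, 2 * f t * deriv f t| ≤ 1 + K := by
    intro y
    have h1 : |∫ t in y..x, 2 * f t * deriv f t|
        ≤ ∫ t in Set.uIoc y x, |2 * f t * deriv f t| := by
      have h0 := intervalIntegral.norm_integral_le_integral_norm_uIoc
          (f := fun t => 2 * f t * deriv f t) (a := y) (b := x) (μ := volume)
      simp only [Real.norm_eq_abs] at h0
      exact h0
    have h2' : ∫ t in Set.uIoc y x, |2 * f t * deriv f t| ≤ ∫ t : ℝ, |2 * f t * deriv f t| :=
      setIntegral_le_integral hg.abs (Filter.Eventually.of_forall fun t => abs_nonneg _)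
    have h3 : ∫ t : ℝ, |2 * f t * deriv f t| ≤ ∫ t : ℝ, ((f t) ^ 2 + (deriv f t) ^ 2) := by
      refine integral_mono hg.abs (h2.add hK) fun t => ?_
      have h1' : |2 * f t * deriv f t| = 2 * (|f t| * |deriv f t|) := by
        rw [mul_assoc, abs_mul, abs_mul]; simp [abs_of_nonneg]
      rw [h1']
      nlinarith [sq_abs (f t), sq_abs (deriv f t), sq_nonneg (|f t| - |deriv f t|)]
    have h4' : ∫ t : ℝ, ((f t) ^ 2 + (deriv f t) ^ 2) = 1 + K := by
      rw [integral_add h2 hK, hnorm]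
    linarith
  have hy : ∃ y : ℝ, f y ^ 2 ≤ 1 / 2 := by
    by_contra hcon
    push_neg at hcon
    have hle : ∫ _ in Set.Icc (0 : ℝ) 3, (1 / 2 : ℝ) ≤ ∫ t in Set.Icc (0 : ℝ) 3, (f t) ^ 2 := by
      refine setIntegral_mono_on ?_ h2.integrableOn measurableSet_Icc fun t _ => (hcon t).le
      exact integrableOn_const (by simp [Real.volume_Icc])
    have h5 : ∫ _ in Set.Icc (0 : ℝ) 3, (1 / 2 : ℝ) = 3 / 2 := by
      simp [Real.volume_Icc]; norm_num
    have h6 : ∫ t in Set.Icc (0 : ℝ) 3, (f t) ^ 2 ≤ 1 := by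
      rw [← hnorm]
      exact setIntegral_le_integral h2 (Filter.Eventually.of_forall fun t => sq_nonneg _)
    linarith
  obtain ⟨y, hy⟩ := hy
  have h7 := hftc y
  have h8 := habs y
  have h9 : f x ^ 2 ≤ f y ^ 2 + |∫ t in y..x, 2 * f t * deriv f t| := by
    have := le_abs_self (∫ t in y..x, 2 * f t * deriv f t)
    linarith
  linarith

/-! ### Lower bounds -/

lemma lb_pos {τ : ℝ} (hτ : 0 ≤ τ) {f : ℝ → ℝ} (hf : montgomeryAdm f) :
    τ ^ 2 ≤ montgomeryForm τ f := by
  have hVint := integrable_pot τ hf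
  obtain ⟨hd, hK, h2, h4, hnorm⟩ := id hf
  have h1 : ∫ t : ℝ, τ ^ 2 * (f t) ^ 2 ≤ ∫ t : ℝ, (t ^ 2 / 2 + τ) ^ 2 * (f t) ^ 2 := by
    refine integral_mono (h2.const_mul _) hVint fun t => ?_
    have h3 : τ ^ 2 ≤ (t ^ 2 / 2 + τ) ^ 2 := by nlinarith [sq_nonneg t]
    exact mul_le_mul_of_nonneg_right h3 (sq_nonneg _)
  rw [form_eq τ hf]
  have h2' : ∫ t : ℝ, τ ^ 2 * (f t) ^ 2 = τ ^ 2 := by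
    rw [integral_const_mul, hnorm, mul_one]
  have hKnn : (0:ℝ) ≤ ∫ t : ℝ, (deriv f t) ^ 2 := integral_nonneg fun t => sq_nonneg _
  linarith

lemma lb_neg {M τ : ℝ} (hM : 1 ≤ M) (hτ : τ ≤ -512 * M * (3 / 2 + M) ^ 2)
    {f : ℝ → ℝ} (hf : montgomeryAdm f) : M ≤ montgomeryForm τ f := by
  obtain ⟨hd, hKint, h2, h4, hnorm⟩ := id hf
  set B : ℝ := 3 / 2 + M with hBdef
  clear_value B
  have hB : 0 < B := by rw [hBdef]; linarith
  set δ : ℝ := 1 / (8 * B) with hδdef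
  clear_value δ
  have hδ : 0 < δ := by rw [hδdef]; positivity
  have hτ0 : τ < 0 := lt_of_le_of_lt hτ (by nlinarith)
  set r : ℝ := Real.sqrt (-2 * τ) with hrdef
  clear_value r
  have hr0 : 0 ≤ r := by rw [hrdef]; exact Real.sqrt_nonneg _
  have hr2 : r ^ 2 = -2 * τ := by rw [hrdef]; exact Real.sq_sqrt (by linarith)
  set K := ∫ t : ℝ, (deriv f t) ^ 2 with hKdef
  clear_value K
  have hKnn : 0 ≤ K := by rw [hKdef]; exact integral_nonneg fun t => sq_nonneg _
  have hVint : Integrable (fun t : ℝ => (t ^ 2 / 2 + τ) ^ 2 * (f t) ^ 2) := integrable_pot τ hf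
  have hform : montgomeryForm τ f = K + ∫ t : ℝ, (t ^ 2 / 2 + τ) ^ 2 * (f t) ^ 2 := by
    rw [hKdef]; exact form_eq τ hf
  have hVnn : (0:ℝ) ≤ ∫ t : ℝ, (t ^ 2 / 2 + τ) ^ 2 * (f t) ^ 2 :=
    integral_nonneg fun t => by positivity
  by_cases hKM : M ≤ K
  · rw [hform]; linarith
  push_neg at hKM
  have hsup : ∀ x : ℝ, (f x) ^ 2 ≤ B := by
    intro x
    have := sup_bound hf x
    rw [← hKdef] at this
    simp only [hBdef]; linarith
  set S : Set ℝ := {t : ℝ | r - δ < |t| ∧ |t| < r + δ} with hSdef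
  clear_value S
  have hSm : MeasurableSet S := by
    have h : S = abs ⁻¹' (Set.Ioo (r - δ) (r + δ)) := by rw [hSdef]; rfl
    rw [h]
    exact measurableSet_Ioo.preimage continuous_abs.measurable
  have hSsub : S ⊆ Set.Ioo (-(r + δ)) (-(r - δ)) ∪ Set.Ioo (r - δ) (r + δ) := by
    intro t ht
    rw [hSdef] at ht
    obtain ⟨ht1, ht2⟩ := ht
    rcases le_or_gt 0 t with h | h
    · right; rw [abs_of_nonneg h] at ht1 ht2; exact ⟨ht1, ht2⟩
    · left; rw [abs_of_neg h] at ht1 ht2; constructor <;> linarith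
  have hvolS : volume S ≤ ENNReal.ofReal (4 * δ) := by
    refine (measure_mono hSsub).trans ((measure_union_le _ _).trans ?_)
    rw [Real.volume_Ioo, Real.volume_Ioo,
      ← ENNReal.ofReal_add (by linarith) (by linarith)]
    apply ENNReal.ofReal_le_ofReal; linarith
  have hSfin : volume S < ⊤ := lt_of_le_of_lt hvolS ENNReal.ofReal_lt_top
  have hvol : (volume S).toReal ≤ 4 * δ :=
    ENNReal.toReal_le_of_le_ofReal (by positivity) hvolS
  have hIS : ∫ t in S, (f t) ^ 2 ≤ 1 / 2 := by
    have h1 : ∫ t in S, (f t) ^ 2 ≤ ∫ _ in S, B := by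
      refine setIntegral_mono_on h2.integrableOn ?_ hSm fun t _ => hsup t
      exact integrableOn_const hSfin.ne
    have h2'' : ∫ _ in S, B = (volume S).toReal * B := by
      rw [setIntegral_const, smul_eq_mul, measureReal_def]
    have h3 : (volume S).toReal * B ≤ 4 * δ * B :=
      mul_le_mul_of_nonneg_right hvol hB.le
    have hδB : 4 * δ * B = 1 / 2 := by
      rw [hδdef]; field_simp; ring
    linarith
  have hcompl : 1 / 2 ≤ ∫ t in Sᶜ, (f t) ^ 2 := by
    have h := integral_add_compl hSm h2
    rw [hnorm] at h
    linarith
  have hW : ∀ t ∉ S, 2 * M ≤ (t ^ 2 / 2 + τ) ^ 2 := by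
    intro t ht
    have habs : |t| ≤ r - δ ∨ r + δ ≤ |t| := by
      by_contra hc
      push_neg at hc
      apply ht
      rw [hSdef]
      exact ⟨hc.1, hc.2⟩
    have ht2 : t ^ 2 = |t| ^ 2 := (sq_abs t).symm
    have hδr : 2 * M ≤ (δ * r) ^ 2 / 4 := by
      have hτ' : 1024 * M * B ^ 2 ≤ -2 * τ := by nlinarith
      have hδ2 : δ ^ 2 * (64 * B ^ 2) = 1 := by
        rw [hδdef]; field_simp; ring
      have e1 : (δ * r) ^ 2 = δ ^ 2 * (-2 * τ) := by rw [mul_pow, hr2]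
      have e3 : δ ^ 2 * (1024 * M * B ^ 2) ≤ δ ^ 2 * (-2 * τ) :=
        mul_le_mul_of_nonneg_left hτ' (sq_nonneg δ)
      have e4 : δ ^ 2 * (1024 * M * B ^ 2) = 16 * M * (δ ^ 2 * (64 * B ^ 2)) := by ring
      rw [e4, hδ2, mul_one] at e3
      rw [e1]
      linarith
    have key : δ * r ≤ |t ^ 2 - r ^ 2| := by
      rcases habs with h | h
      · have habs0 : 0 ≤ |t| := abs_nonneg t
        have h1 : δ * r ≤ r ^ 2 - t ^ 2 := by nlinarith
        calc δ * r ≤ r ^ 2 - t ^ 2 := h1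
          _ ≤ |t ^ 2 - r ^ 2| := by rw [abs_sub_comm]; exact le_abs_self _
      · have habs0 : 0 ≤ |t| := abs_nonneg t
        have h1 : δ * r ≤ t ^ 2 - r ^ 2 := by nlinarith
        exact h1.trans (le_abs_self _)
    have h5 : t ^ 2 / 2 + τ = (t ^ 2 - r ^ 2) / 2 := by rw [hr2]; ring
    have h6 : (δ * r) ^ 2 ≤ (t ^ 2 - r ^ 2) ^ 2 := by
      have := mul_self_le_mul_self (by positivity) key
      rwa [← sq, ← sq, sq_abs] at this
    rw [h5, div_pow]
    have h7 : (δ * r) ^ 2 / 4 ≤ (t ^ 2 - r ^ 2) ^ 2 / 4 := by linarith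
    have h8 : ((2:ℝ)) ^ 2 = 4 := by norm_num
    rw [h8]
    linarith
  have hV2 : 2 * M * ∫ t in Sᶜ, (f t) ^ 2 ≤ ∫ t in Sᶜ, (t ^ 2 / 2 + τ) ^ 2 * (f t) ^ 2 := by
    rw [← integral_const_mul]
    refine setIntegral_mono_on (h2.integrableOn.const_mul _) hVint.integrableOn
      hSm.compl fun t ht => ?_
    exact mul_le_mul_of_nonneg_right (hW t ht) (sq_nonneg _)
  have hV3 : ∫ t in Sᶜ, (t ^ 2 / 2 + τ) ^ 2 * (f t) ^ 2
      ≤ ∫ t : ℝ, (t ^ 2 / 2 + τ) ^ 2 * (f t) ^ 2 :=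
    setIntegral_le_integral hVint (Filter.Eventually.of_forall fun t => by positivity)
  rw [hform]
  nlinarith [mul_le_mul_of_nonneg_left hcompl (by linarith : (0:ℝ) ≤ 2 * M)]

end MontgomeryAux

/-- The lowest eigenvalue `λ(τ)` of the Montgomery operator tends to `+∞` as `τ → +∞`
and as `τ → -∞`. -/
theorem montgomeryLambda_tendsto_atTop :
    Filter.Tendsto montgomeryLambda Filter.atTop Filter.atTop ∧
    Filter.Tendsto montgomeryLambda Filter.atBot Filter.atTop := by
  constructor
  · rw [Filter.tendsto_atTop]
    intro b
    filter_upwards [Filter.eventually_ge_atTop (max 1 b)] with τ hτ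
    have h1 : (1:ℝ) ≤ τ := le_trans (le_max_left _ _) hτ
    have hb : b ≤ τ := le_trans (le_max_right _ _) hτ
    have h2 : τ ^ 2 ≤ montgomeryLambda τ :=
      MontgomeryAux.lambda_ge fun f hf => MontgomeryAux.lb_pos (by linarith) hf
    nlinarith
  · rw [Filter.tendsto_atTop]
    intro b
    set M : ℝ := max 1 b with hMdef
    filter_upwards [Filter.eventually_le_atBot (-512 * M * (3 / 2 + M) ^ 2)] with τ hτ
    have h2 : M ≤ montgomeryLambda τ :=
      MontgomeryAux.lambda_ge fun f hf => MontgomeryAux.lb_neg (le_max_left _ _) hτ hf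
    exact le_trans (le_max_right _ _) h2
end

section
/- The lowest eigenvalue of the Montgomery operator at τ = 0 satisfies λ(0) ≤ (3/4)^{4/3}. -/
open MeasureTheory

open Real
lemma int_pow_gauss {b : ℝ} (hb : 0 < b) (n : ℕ) :
    Integrable fun x : ℝ => x ^ n * Real.exp (-b * x ^ 2) := by
  have : (-1 : ℝ) < n := lt_of_lt_of_le (by norm_num) (Nat.cast_nonneg n)
  simpa [Real.rpow_natCast] using integrable_rpow_mul_exp_neg_mul_sq hb this

lemma gauss_moment_rec {b : ℝ} (hb : 0 < b) (n : ℕ) :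
    ∫ x : ℝ, x ^ (n + 2) * Real.exp (-b * x ^ 2)
      = ((n + 1 : ℝ) / (2 * b)) * ∫ x : ℝ, x ^ n * Real.exp (-b * x ^ 2) := by
  have hu : ∀ x : ℝ, HasDerivAt (fun x : ℝ => x ^ (n + 1)) ((n + 1 : ℝ) * x ^ n) x := by
    intro x; simpa using hasDerivAt_pow (n + 1) x
  have hv : ∀ x : ℝ, HasDerivAt (fun x : ℝ => Real.exp (-b * x ^ 2))
      ((-b * (2 * x)) * Real.exp (-b * x ^ 2)) x := by
    intro x
    have h1 : HasDerivAt (fun x : ℝ => -b * x ^ 2) (-b * (2 * x)) x := by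
      simpa using (hasDerivAt_pow 2 x).const_mul (-b)
    simpa [mul_comm] using h1.exp
  have e1 : (fun x : ℝ => x ^ (n + 1) * ((-b * (2 * x)) * Real.exp (-b * x ^ 2)))
      = fun x : ℝ => (-(2 * b)) * (x ^ (n + 2) * Real.exp (-b * x ^ 2)) := by
    funext x; ring
  have e2 : (fun x : ℝ => ((n + 1 : ℝ) * x ^ n) * Real.exp (-b * x ^ 2))
      = fun x : ℝ => (n + 1 : ℝ) * (x ^ n * Real.exp (-b * x ^ 2)) := by
    funext x; ring
  have h1 : Integrable (fun x : ℝ => x ^ (n + 1) * ((-b * (2 * x)) * Real.exp (-b * x ^ 2))) := by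
    rw [e1]; exact (int_pow_gauss hb (n + 2)).const_mul _
  have h2 : Integrable (fun x : ℝ => ((n + 1 : ℝ) * x ^ n) * Real.exp (-b * x ^ 2)) := by
    rw [e2]; exact (int_pow_gauss hb n).const_mul _
  have h3 : Integrable (fun x : ℝ => x ^ (n + 1) * Real.exp (-b * x ^ 2)) :=
    int_pow_gauss hb (n + 1)
  have key := integral_mul_deriv_eq_deriv_mul_of_integrable (fun x _ => hu x) (fun x _ => hv x) h1 h2 h3
  rw [e1] at key
  rw [e2] at key
  rw [MeasureTheory.integral_const_mul, MeasureTheory.integral_const_mul] at key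
  have hb' : (2 : ℝ) * b ≠ 0 := by positivity
  field_simp at key ⊢
  linarith [key]

/-- The lowest eigenvalue of the Montgomery operator at `τ = 0` satisfies
`λ(0) ≤ (3/4)^(4/3)`. -/
theorem montgomeryLambda_zero_le :
    montgomeryLambda 0 ≤ (3 / 4 : ℝ) ^ ((4 : ℝ) / 3) := by
  set a : ℝ := (3 / 4 : ℝ) ^ ((1 : ℝ) / 3) with ha_def
  have ha : 0 < a := Real.rpow_pos_of_pos (by norm_num) _
  have ha3 : a ^ 3 = 3 / 4 := by
    rw [ha_def, ← Real.rpow_natCast ((3/4:ℝ) ^ ((1:ℝ)/3)) 3, ← Real.rpow_mul (by norm_num)]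
    norm_num
  set c : ℝ := Real.sqrt (Real.sqrt (a / π)) with hc_def
  have hc2 : c ^ 2 = Real.sqrt (a / π) := Real.sq_sqrt (Real.sqrt_nonneg _)
  have hπ : (0 : ℝ) < π := Real.pi_pos
  have hnorm : c ^ 2 * Real.sqrt (π / a) = 1 := by
    rw [hc2, ← Real.sqrt_mul (by positivity)]
    rw [show a / π * (π / a) = 1 by field_simp]
    exact Real.sqrt_one
  set f : ℝ → ℝ := fun t => c * Real.exp (-(a / 2) * t ^ 2) with hf_def
  -- derivative
  have hderiv : ∀ t : ℝ, HasDerivAt f ((-a * t) * (c * Real.exp (-(a / 2) * t ^ 2))) t := by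
    intro t
    have h1 : HasDerivAt (fun t : ℝ => -(a / 2) * t ^ 2) (-(a / 2) * (2 * t)) t := by
      simpa using (hasDerivAt_pow 2 t).const_mul (-(a / 2))
    have h2 := (h1.exp).const_mul c
    refine h2.congr_deriv ?_
    ring
  have hdiff : Differentiable ℝ f := fun t => (hderiv t).differentiableAt
  have hderiv' : ∀ t : ℝ, deriv f t = (-a * t) * (c * Real.exp (-(a / 2) * t ^ 2)) :=
    fun t => (hderiv t).deriv
  -- squares
  have hexp_sq : ∀ t : ℝ, Real.exp (-(a / 2) * t ^ 2) ^ 2 = Real.exp (-a * t ^ 2) := by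
    intro t; rw [sq, ← Real.exp_add]; ring_nf
  have hf_sq : ∀ t : ℝ, (f t) ^ 2 = c ^ 2 * (Real.exp (-a * t ^ 2)) := by
    intro t; rw [hf_def]; simp only [mul_pow, hexp_sq]
  have hd_sq : ∀ t : ℝ, (deriv f t) ^ 2
      = (c ^ 2 * a ^ 2) * (t ^ 2 * Real.exp (-a * t ^ 2)) := by
    intro t; rw [hderiv' t, mul_pow, mul_pow, mul_pow, hexp_sq]; ring
  have ht4_sq : ∀ t : ℝ, (t ^ 2 * f t) ^ 2 = c ^ 2 * (t ^ 4 * Real.exp (-a * t ^ 2)) := by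
    intro t; rw [mul_pow, hf_sq t]; ring
  -- integrability
  have I0 := int_pow_gauss ha 0
  have I2 := int_pow_gauss ha 2
  have I4 := int_pow_gauss ha 4
  have hint_f : Integrable (fun t : ℝ => (f t) ^ 2) := by
    simp only [hf_sq]
    exact Integrable.const_mul (by simpa using I0) _
  have hint_d : Integrable (fun t : ℝ => (deriv f t) ^ 2) := by
    simp only [hd_sq]; exact I2.const_mul _
  have hint_t4 : Integrable (fun t : ℝ => (t ^ 2 * f t) ^ 2) := by
    simp only [ht4_sq]; exact I4.const_mul _
  -- integral values
  have J0 : ∫ t : ℝ, Real.exp (-a * t ^ 2) = Real.sqrt (π / a) := integral_gaussian a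
  have J2 : ∫ t : ℝ, t ^ 2 * Real.exp (-a * t ^ 2) = 1 / (2 * a) * Real.sqrt (π / a) := by
    have h := gauss_moment_rec ha 0
    simp only [Nat.cast_zero, zero_add, pow_zero, one_mul, J0] at h
    exact h
  have J4 : ∫ t : ℝ, t ^ 4 * Real.exp (-a * t ^ 2)
      = 3 / (4 * a ^ 2) * Real.sqrt (π / a) := by
    have h := gauss_moment_rec ha 2
    rw [J2] at h
    simp only [Nat.cast_ofNat, Nat.reduceAdd] at h
    rw [h]
    field_simp
    ring
  -- normalization
  have hnorm1 : (∫ t : ℝ, (f t) ^ 2) = 1 := by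
    simp only [hf_sq]
    rw [MeasureTheory.integral_const_mul, J0, hnorm]
  -- the form value
  have hform : montgomeryForm 0 f = (3 / 4 : ℝ) ^ ((4 : ℝ) / 3) := by
    have hrw : (fun t : ℝ => (deriv f t) ^ 2 + (t ^ 2 / 2 + 0) ^ 2 * (f t) ^ 2)
        = fun t : ℝ => (c ^ 2 * a ^ 2) * (t ^ 2 * Real.exp (-a * t ^ 2))
            + (c ^ 2 / 4) * (t ^ 4 * Real.exp (-a * t ^ 2)) := by
      funext t; rw [hd_sq t, hf_sq t]; ring
    rw [montgomeryForm, hrw, integral_add (I2.const_mul _) (I4.const_mul _),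
      MeasureTheory.integral_const_mul, MeasureTheory.integral_const_mul, J2, J4]
    have key : c ^ 2 * a ^ 2 * (1 / (2 * a) * Real.sqrt (π / a))
        + c ^ 2 / 4 * (3 / (4 * a ^ 2) * Real.sqrt (π / a))
        = (c ^ 2 * Real.sqrt (π / a)) * (a / 2 + 3 / (16 * a ^ 2)) := by
      field_simp; ring
    rw [key, hnorm, one_mul]
    have hval : a / 2 + 3 / (16 * a ^ 2) = a ^ 4 := by
      have h3 : (3 : ℝ) = 4 * a ^ 3 := by rw [ha3]; ring
      field_simp
      nlinarith [ha3, sq_nonneg a]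
    rw [hval]
    rw [ha_def, ← Real.rpow_natCast ((3/4:ℝ) ^ ((1:ℝ)/3)) 4, ← Real.rpow_mul (by norm_num)]
    norm_num
  -- conclusion
  have hmem : (3 / 4 : ℝ) ^ ((4 : ℝ) / 3)
      ∈ {E : ℝ | ∃ f : ℝ → ℝ, montgomeryAdm f ∧ montgomeryForm 0 f = E} :=
    ⟨f, ⟨hdiff, hint_d, hint_f, hint_t4, hnorm1⟩, hform⟩
  have hbdd : BddBelow {E : ℝ | ∃ f : ℝ → ℝ, montgomeryAdm f ∧ montgomeryForm 0 f = E} := by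
    refine ⟨0, fun E hE => ?_⟩
    obtain ⟨g, _, hg⟩ := hE
    rw [← hg]
    exact integral_nonneg fun t => by positivity
  exact csInf_le hbdd hmem
end

section
/- (Abstract subadditivity limit) Let f : (0,∞) → ℝ be bounded, and suppose there exist constants C > 0 and a function so that for all a ∈ (0,1), all ℓ ≥ 1 and all integers n ≥ 2, f(nℓ) ≥ f((1+a)ℓ) − C(a + 1/(a²ℓ²)). Then f(ℓ) converges to a finite limit as ℓ → ∞. -/
open Filter

set_option maxHeartbeats 2000000 in
/-- Abstract almost-superadditivity lemma: if `f : (0,∞) → ℝ` is bounded and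
`f(nℓ) ≥ f((1+a)ℓ) − C(a + 1/(a²ℓ²))` for all `a ∈ (0,1)`, `ℓ ≥ 1` and integers `n ≥ 2`,
then `f(ℓ)` converges to a finite limit as `ℓ → ∞`. -/
theorem almost_superadditive_limit (f : ℝ → ℝ) (C M : ℝ) (hC : 0 < C)
    (hbdd : ∀ ℓ : ℝ, 0 < ℓ → |f ℓ| ≤ M)
    (hsub : ∀ a : ℝ, 0 < a → a < 1 → ∀ ℓ : ℝ, 1 ≤ ℓ → ∀ n : ℕ, 2 ≤ n →
      f ((1 + a) * ℓ) - C * (a + 1 / (a ^ 2 * ℓ ^ 2)) ≤ f ((n : ℝ) * ℓ)) :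
    ∃ E : ℝ, Filter.Tendsto f Filter.atTop (nhds E) := by
  have hb : ∀ᶠ ℓ in atTop, |f ℓ| ≤ M :=
    eventually_atTop.2 ⟨1, fun ℓ h => hbdd ℓ (by linarith)⟩
  have hba : IsBoundedUnder (· ≤ ·) atTop f :=
    ⟨M, hb.mono fun x h => (abs_le.1 h).2⟩
  have hbb : IsBoundedUnder (· ≥ ·) atTop f :=
    ⟨-M, hb.mono fun x h => (abs_le.1 h).1⟩
  set S := limsup f atTop with hS
  set I := liminf f atTop with hI
  clear_value S I
  -- main quantitative claim
  have key : ∀ ε : ℝ, 0 < ε → ε < 1 / 2 → S - (1 + 3 * C) * ε ≤ I := by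
    intro ε hε hε2
    -- pick t large with f t close to S
    have hfreq : ∃ᶠ x in atTop, S - ε < f x :=
      frequently_lt_of_lt_limsup hbb.isCoboundedUnder_le (by linarith)
    obtain ⟨t, htf, hft⟩ := (hfreq.and_eventually (eventually_ge_atTop (max 2 (2 / ε ^ 2)))).exists
    have ht2 : (2 : ℝ) ≤ t := le_trans (le_max_left _ _) hft
    have htε : 2 / ε ^ 2 ≤ t := le_trans (le_max_right _ _) hft
    have htpos : (0 : ℝ) < t := by linarith
    rw [hI]
    refine le_liminf_of_le hba.isCoboundedUnder_ge ?_
    filter_upwards [eventually_ge_atTop (t / ε)] with L hL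
    have hLt : t / ε ≤ L := hL
    have hLpos : 0 < L := lt_of_lt_of_le (by positivity) hLt
    -- t/ε ≥ t since ε < 1; also L*ε ≥ t
    have hLε : t ≤ L * ε := by
      rw [div_le_iff₀ hε] at hLt; linarith
    set n : ℕ := ⌈L * (1 + ε) / t⌉₊ with hn
    have hq0 : (0:ℝ) ≤ L * (1 + ε) / t := by positivity
    have hn1 : L * (1 + ε) / t ≤ (n : ℝ) := Nat.le_ceil _
    have hn2 : (n : ℝ) < L * (1 + ε) / t + 1 := Nat.ceil_lt_add_one hq0
    -- in product form
    have hn1' : L * (1 + ε) ≤ (n : ℝ) * t := by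
      rw [div_le_iff₀ htpos] at hn1; linarith
    have hn2' : (n : ℝ) * t ≤ L * (1 + 2 * ε) := by
      have : (n : ℝ) * t < (L * (1 + ε) / t + 1) * t := by
        exact mul_lt_mul_of_pos_right hn2 htpos
      rw [add_mul, div_mul_cancel₀ _ (ne_of_gt htpos)] at this
      nlinarith
    clear hn; clear_value n
    have hnpos : (0 : ℝ) < n := by nlinarith
    set a : ℝ := (n : ℝ) * t / L - 1 with ha
    clear_value a
    have haε : ε ≤ a := by
      rw [ha, le_sub_iff_add_le, le_div_iff₀ hLpos]
      nlinarith
    have ha2ε : a ≤ 2 * ε := by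
      rw [ha, sub_le_iff_le_add, div_le_iff₀ hLpos]; nlinarith
    have ha0 : 0 < a := lt_of_lt_of_le hε haε
    have ha1 : a < 1 := by linarith
    set ℓ : ℝ := L / n with hℓ
    clear_value ℓ
    have hℓpos : 0 < ℓ := hℓ ▸ div_pos hLpos hnpos
    -- n*t ≤ 2L  (since 1+2ε ≤ 2)
    have hnt2L : (n : ℝ) * t ≤ 2 * L := by nlinarith
    have hℓt2 : t / 2 ≤ ℓ := by
      rw [hℓ, div_le_div_iff₀ (by norm_num : (0:ℝ) < 2) hnpos]; nlinarith
    have hℓ1 : 1 ≤ ℓ := by linarith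
    have hn2ℕ : 2 ≤ n := by
      have h2 : (2 : ℝ) < (n : ℝ) := by
        have h1ε : 1 / ε ≤ (n:ℝ) := by
          rw [div_le_iff₀ hε]
          have h := mul_le_mul_of_nonneg_left hLε hnpos.le
          have h2 : (1:ℝ) * L ≤ ((n:ℝ) * ε) * L := by
            nlinarith [mul_pos hLpos hε]
          exact le_of_mul_le_mul_right (by linarith) hLpos
        have : (2:ℝ) < 1/ε := by rw [lt_div_iff₀ hε]; linarith
        linarith
      exact_mod_cast h2.le
    -- key identities
    have hnL : (n : ℝ) * ℓ = L := by
      rw [hℓ, mul_div_assoc']; exact mul_div_cancel_left₀ L (ne_of_gt hnpos)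
    have haℓ : (1 + a) * ℓ = t := by
      rw [ha, hℓ]; field_simp; ring
    have herr : a + 1 / (a ^ 2 * ℓ ^ 2) ≤ 3 * ε := by
      have h1 : 1 / (a ^ 2 * ℓ ^ 2) ≤ 1 / (ε ^ 2 * (t / 2) ^ 2) := by
        apply one_div_le_one_div_of_le (by positivity)
        have := mul_le_mul (pow_le_pow_left₀ hε.le haε 2) (pow_le_pow_left₀ (by positivity) hℓt2 2) (by positivity) (by positivity)
        linarith
      have h2 : 1 / (ε ^ 2 * (t / 2) ^ 2) ≤ ε := by
        rw [div_le_iff₀ (by positivity)]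
        have ht' : 2 / ε ^ 2 ≤ t := htε
        have : (2 / ε ^ 2) ^ 2 ≤ t ^ 2 := pow_le_pow_left₀ (by positivity) ht' 2
        have hεt : 4 / ε ^ 4 ≤ t ^ 2 := by
          calc 4 / ε ^ 4 = (2 / ε ^ 2) ^ 2 := by ring
          _ ≤ t ^ 2 := this
        have h4 : 4 / ε ^ 4 * ε ^ 4 = 4 := by field_simp
        nlinarith [pow_pos hε 4, pow_pos hε 2]
      linarith
    have := hsub a ha0 ha1 ℓ hℓ1 n hn2ℕ
    rw [hnL, haℓ] at this
    have hCerr : C * (a + 1 / (a ^ 2 * ℓ ^ 2)) ≤ C * (3 * ε) :=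
      mul_le_mul_of_nonneg_left herr hC.le
    linarith
  have hIS : I ≤ S := by rw [hI, hS]; exact liminf_le_limsup hba hbb
  have hSI : S ≤ I := by
    refine le_of_forall_pos_le_add fun δ hδ => ?_
    have h13C : (0:ℝ) < 1 + 3 * C := by linarith
    set ε : ℝ := min (δ / (1 + 3 * C)) (1 / 4) with hε
    have hεpos : 0 < ε := lt_min (by positivity) (by norm_num)
    have hε2 : ε < 1 / 2 := lt_of_le_of_lt (min_le_right _ _) (by norm_num)
    have hk := key ε hεpos hε2
    have hle : (1 + 3 * C) * ε ≤ δ := by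
      calc (1 + 3 * C) * ε ≤ (1 + 3 * C) * (δ / (1 + 3 * C)) :=
            mul_le_mul_of_nonneg_left (min_le_left _ _) h13C.le
        _ = δ := by field_simp
    linarith
  refine ⟨S, tendsto_of_liminf_eq_limsup ?_ hS.symm hba hbb⟩
  rw [← hI]; exact le_antisymm hIS hSI
end
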